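/- Let K be a number field, α_1,…,α_m ∈ K, l ≥ 1, μ ∈ {0,1,…,m}, and let σ_i be defined by Π_{j=1}^m (α_j − w)^l = Σ_{i=0}^{ml} σ_i w^i. Set b_{l,μ,0} = Σ_{i=0}^{ml} σ_i · (ml+μ)!/(i+μ)!. Then for every Archimedean normalized absolute value ‖·‖_v of K, ‖b_{l,μ,0}‖_v ≤ ‖(ml)! · C(ml+μ, μ)‖_v · Π_{j=1}^m (‖α_j‖_v + 1)^l. -/

import Mathlib

open Polynomial Finset Nat NumberField

/-- The paper's normalised absolute value attached to an Archimedean place `w` of a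
number field `K` of degree `κ`:  `‖x‖_w = (w x) ^ (mult w / κ)`. -/
noncomputable def infNorm (K : Type*) [Field K] [NumberField K]
    (w : InfinitePlace K) (x : K) : ℝ :=
  (w x) ^ ((w.mult : ℝ) / (Module.finrank ℚ K : ℝ))

private lemma coeff_norm_mul {p q : Polynomial ℂ} {P Q : Polynomial ℝ}
    (hp : ∀ i, ‖p.coeff i‖ ≤ P.coeff i) (hq : ∀ i, ‖q.coeff i‖ ≤ Q.coeff i) :
    ∀ i, ‖(p * q).coeff i‖ ≤ (P * Q).coeff i := by
  intro k
  rw [coeff_mul, coeff_mul]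
  refine le_trans (norm_sum_le _ _) (Finset.sum_le_sum ?_)
  intro ij _
  rw [norm_mul]
  exact mul_le_mul (hp _) (hq _) (norm_nonneg _) ((norm_nonneg _).trans (hp _))

private lemma coeff_norm_prod {ι : Type*} (s : Finset ι) (p : ι → Polynomial ℂ)
    (P : ι → Polynomial ℝ)
    (h : ∀ j ∈ s, ∀ i, ‖(p j).coeff i‖ ≤ (P j).coeff i) :
    ∀ i, ‖(∏ j ∈ s, p j).coeff i‖ ≤ (∏ j ∈ s, P j).coeff i := by
  classical
  induction s using Finset.induction with
  | empty =>
    intro i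
    simp only [Finset.prod_empty, Polynomial.coeff_one]
    split <;> simp
  | @insert a s ha ih =>
    rw [Finset.prod_insert ha, Finset.prod_insert ha]
    exact coeff_norm_mul (h a (Finset.mem_insert_self a s))
      (ih fun j hj i => h j (Finset.mem_insert_of_mem hj) i)

private lemma coeff_norm_pow (a : ℂ) (l : ℕ) :
    ∀ i, ‖((C a - X) ^ l).coeff i‖ ≤ ((X + C ‖a‖) ^ l).coeff i := by
  have base : ∀ i, ‖(C a - X).coeff i‖ ≤ (X + C ‖a‖).coeff i := by
    intro i
    match i with
    | 0 => simp [coeff_sub]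
    | 1 => simp [coeff_sub]
    | (n + 2) => simp [coeff_sub, coeff_X, coeff_C]
  have := coeff_norm_prod (Finset.range l) (fun _ => C a - X) (fun _ => X + C ‖a‖)
    (fun _ _ i => base i)
  simpa using this

private lemma real_rpow_add_le {x y e : ℝ} (hx : 0 ≤ x) (hy : 0 ≤ y) (he : 0 ≤ e)
    (he1 : e ≤ 1) : (x + y) ^ e ≤ x ^ e + y ^ e := by
  have h := NNReal.rpow_add_le_add_rpow (⟨x, hx⟩ : NNReal) (⟨y, hy⟩ : NNReal) he he1
  have := NNReal.coe_le_coe.mpr h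
  push_cast [NNReal.coe_rpow] at this
  exact this

/-- with `σ_i` defined by `∏ j, (α j − w)^l = ∑ i, σ i * w^i` and
`b_{l,μ,0} = ∑_{i=0}^{ml} σ i · (ml+μ)!/(i+μ)!`, for every Archimedean normalised
absolute value `‖·‖_v` of `K` one has
`‖b_{l,μ,0}‖_v ≤ ‖(ml)! · C(ml+μ, μ)‖_v · ∏ j, (‖α j‖_v + 1)^l`. -/
theorem pade_b0_archimedean_bound {K : Type*} [Field K] [NumberField K]
    {m : ℕ} (α : Fin m → K) (l μ : ℕ) (hl : 1 ≤ l) (hμ : μ ≤ m)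
    (σ : ℕ → K)
    (hσ : ∀ i, σ i = (∏ j, (C (α j) - X) ^ l).coeff i)
    (v : InfinitePlace K) :
    infNorm K v (∑ i ∈ range (m * l + 1),
        σ i * (((m * l + μ)! : K) / ((i + μ)! : K)))
      ≤ infNorm K v ((((m * l)! * (m * l + μ).choose μ : ℕ)) : K) *
          ∏ j, (infNorm K v (α j) + 1) ^ l := by
  classical
  set e : ℝ := (v.mult : ℝ) / (Module.finrank ℚ K : ℝ) with he_def
  have hκ : 0 < (Module.finrank ℚ K : ℝ) := by
    exact_mod_cast Module.finrank_pos
  have hmult_le : (v.mult : ℝ) ≤ (Module.finrank ℚ K : ℝ) := by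
    have := InfinitePlace.sum_mult_eq (K := K)
    have hle : v.mult ≤ Module.finrank ℚ K := by
      rw [← this]
      exact Finset.single_le_sum (fun w _ => Nat.zero_le _) (Finset.mem_univ v)
    exact_mod_cast hle
  have he0 : 0 < e := div_pos (by exact_mod_cast v.mult_pos) hκ
  have he1 : e ≤ 1 := (div_le_one hκ).mpr hmult_le
  set emb := v.embedding with hemb
  set CN : ℕ := (m * l)! * (m * l + μ).choose μ with hCN
  -- the key archimedean bound before taking the rpow
  have key : v (∑ i ∈ range (m * l + 1),
      σ i * (((m * l + μ)! : K) / ((i + μ)! : K)))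
      ≤ (CN : ℝ) * ∏ j, (v (α j) + 1) ^ l := by
    rw [← InfinitePlace.norm_embedding_eq]
    rw [map_sum]
    refine le_trans (norm_sum_le _ _) ?_
    -- bound each term
    have hterm : ∀ i ∈ range (m * l + 1),
        ‖emb (σ i * (((m * l + μ)! : K) / ((i + μ)! : K)))‖
          ≤ (CN : ℝ) * ‖emb (σ i)‖ := by
      intro i _
      rw [map_mul, norm_mul, map_div₀, map_natCast, map_natCast, norm_div]
      rw [Complex.norm_natCast, Complex.norm_natCast]
      rw [mul_comm ((CN : ℝ)) _]
      refine mul_le_mul_of_nonneg_left ?_ (norm_nonneg _)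
      have hfac : ((μ)! : ℝ) ≤ ((i + μ)! : ℝ) := by
        exact_mod_cast Nat.factorial_le (Nat.le_add_left μ i)
      have hfacpos : (0 : ℝ) < ((μ)! : ℝ) := by exact_mod_cast Nat.factorial_pos μ
      have h1 : ((m * l + μ)! : ℝ) / ((i + μ)! : ℝ) ≤ ((m * l + μ)! : ℝ) / ((μ)! : ℝ) :=
        div_le_div_of_nonneg_left (by positivity) hfacpos hfac
      refine h1.trans (le_of_eq ?_)
      rw [div_eq_iff (ne_of_gt hfacpos)]
      have := Nat.choose_mul_factorial_mul_factorial (Nat.le_add_left μ (m * l))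
      have h2 : CN * (μ)! = (m * l + μ)! := by
        rw [hCN]
        have := Nat.choose_mul_factorial_mul_factorial (Nat.le_add_left μ (m * l))
        -- choose (m*l+μ) μ * μ! * (m*l+μ-μ)! = (m*l+μ)!
        simp only [Nat.add_sub_cancel] at this
        calc (m * l)! * (m * l + μ).choose μ * (μ)!
            = (m * l + μ).choose μ * (μ)! * (m * l)! := by ring
          _ = (m * l + μ)! := this
      exact_mod_cast h2.symm
    refine le_trans (Finset.sum_le_sum hterm) ?_
    rw [← Finset.mul_sum]
    refine mul_le_mul_of_nonneg_left ?_ (by positivity)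
    -- ∑ ‖emb (σ i)‖ ≤ ∏ (v (α j) + 1)^l
    have hcoeff : ∀ i, emb (σ i) = (∏ j, (C (emb (α j)) - X) ^ l).coeff i := by
      intro i
      rw [hσ i]
      rw [← Polynomial.coeff_map]
      congr 1
      rw [Polynomial.map_prod]
      refine Finset.prod_congr rfl fun j _ => ?_
      rw [Polynomial.map_pow, Polynomial.map_sub, Polynomial.map_C, Polynomial.map_X]
    have hbound := coeff_norm_prod Finset.univ (fun j => (C (emb (α j)) - X) ^ l)
      (fun j => (X + C ‖emb (α j)‖) ^ l) (fun j _ i => coeff_norm_pow (emb (α j)) l i)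
    set P : Polynomial ℝ := ∏ j, (X + C ‖emb (α j)‖) ^ l with hP
    have hdeg : P.natDegree ≤ m * l := by
      refine le_trans (Polynomial.natDegree_prod_le _ _) ?_
      have : ∀ j : Fin m, ((X + C ‖emb (α j)‖) ^ l).natDegree ≤ l := by
        intro j
        rw [Polynomial.natDegree_pow]
        have : (X + C ‖emb (α j)‖).natDegree ≤ 1 := by
          refine Polynomial.natDegree_add_le_of_degree_le ?_ ?_
          · exact Polynomial.natDegree_X_le
          · exact le_trans (Polynomial.natDegree_C _).le (by norm_num)
        calc l * (X + C ‖emb (α j)‖).natDegree ≤ l * 1 :=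
              Nat.mul_le_mul_left l this
          _ = l := by ring
      refine le_trans (Finset.sum_le_sum fun j _ => this j) ?_
      simp [mul_comm]
    have heval : ∑ i ∈ range (m * l + 1), P.coeff i = ∏ j, (v (α j) + 1) ^ l := by
      have h1 : P.eval 1 = ∑ i ∈ range (m * l + 1), P.coeff i * 1 ^ i :=
        Polynomial.eval_eq_sum_range' (Nat.lt_succ_of_le hdeg) 1
      have h2 : P.eval 1 = ∏ j, (v (α j) + 1) ^ l := by
        rw [hP, Polynomial.eval_prod]
        refine Finset.prod_congr rfl fun j _ => ?_
        rw [Polynomial.eval_pow, Polynomial.eval_add, Polynomial.eval_X, Polynomial.eval_C]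
        rw [← InfinitePlace.norm_embedding_eq]
        ring_nf
        rfl
      rw [← h2, h1]
      simp
    rw [← heval]
    refine Finset.sum_le_sum fun i _ => ?_
    rw [hcoeff i]
    exact hbound i
  -- now take the rpow
  have hvnn : 0 ≤ v (∑ i ∈ range (m * l + 1),
      σ i * (((m * l + μ)! : K) / ((i + μ)! : K))) := AbsoluteValue.nonneg _ _
  have hrhs_nn : 0 ≤ (CN : ℝ) * ∏ j, (v (α j) + 1) ^ l := by positivity
  unfold infNorm
  rw [← he_def]
  calc (v (∑ i ∈ range (m * l + 1), σ i * (((m * l + μ)! : K) / ((i + μ)! : K)))) ^ e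
      ≤ ((CN : ℝ) * ∏ j, (v (α j) + 1) ^ l) ^ e :=
        Real.rpow_le_rpow hvnn key he0.le
    _ = (CN : ℝ) ^ e * (∏ j, (v (α j) + 1) ^ l) ^ e := by
        rw [Real.mul_rpow (by positivity) (by positivity)]
    _ ≤ v ((CN : K)) ^ e * ∏ j, (v (α j) ^ e + 1) ^ l := by
        have hC : v ((CN : K)) = (CN : ℝ) := by
          rw [← InfinitePlace.norm_embedding_eq, map_natCast, Complex.norm_natCast]
        rw [hC]
        refine mul_le_mul_of_nonneg_left ?_ (by positivity)
        rw [← Real.finset_prod_rpow _ _ (fun j _ => by positivity) e]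
        refine Finset.prod_le_prod (fun j _ => by positivity) fun j _ => ?_
        have hx : 0 ≤ v (α j) + 1 := by positivity
        have h1 : ((v (α j) + 1) ^ l : ℝ) ^ e = ((v (α j) + 1) ^ e) ^ l := by
          rw [← Real.rpow_natCast (v (α j) + 1) l, ← Real.rpow_mul hx,
            mul_comm, Real.rpow_mul hx, Real.rpow_natCast]
        rw [h1]
        refine pow_le_pow_left₀ (by positivity) ?_ l
        have := real_rpow_add_le (AbsoluteValue.nonneg _ _ : 0 ≤ v (α j))
          (zero_le_one) he0.le he1
        rw [Real.one_rpow] at this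
        exact this
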